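/- arXiv:1603.00284 — 4 statements merged into one kernel-verified Lean document; each statement's English description precedes it below -/
import Mathlib

section
/- Let f be proper convex lsc on ℝ^n with minimizer x⋆. Suppose (μ_k) is a sequence with 0 < μ_k and limsup μ_k < ∞, and (ε_k) satisfies Σ ε_k < ∞. Define the inexact proximal point iteration: ỹ_{k+1} = argmin_x f(x) + (μ_k/2)‖x−y_k‖², and y_{k+1} any point with ‖y_{k+1} − ỹ_{k+1}‖ ≤ ε_k. Then (y_k) converges to a minimizer of f. -/
open Filter Topology

lemma aux_le_of_forall_small (a b d : ℝ) (h : ∀ s : ℝ, 0 < s → s ≤ 1 → a ≤ b + s * d) : a ≤ b := by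
  have h1 : Filter.Tendsto (fun k : ℕ => b + (1 / (k + 1 : ℝ)) * d) atTop (𝓝 (b + 0 * d)) :=
    tendsto_const_nhds.add (tendsto_one_div_add_atTop_nhds_zero_nat.mul tendsto_const_nhds)
  rw [zero_mul, add_zero] at h1
  refine ge_of_tendsto' h1 (fun k => h _ (by positivity) ?_)
  rw [div_le_one (by positivity)]
  linarith [Nat.cast_nonneg (α := ℝ) k]

lemma aux_prox_step {n : ℕ} (f : EuclideanSpace ℝ (Fin n) → EReal)
    (hconv : Convex ℝ {p : EuclideanSpace ℝ (Fin n) × ℝ | f p.1 ≤ (p.2 : EReal)})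
    (hbot : ∀ x, f x ≠ ⊥)
    {z : EuclideanSpace ℝ (Fin n)} (hz : IsMinOn f Set.univ z) (hzt : f z ≠ ⊤)
    {μ : ℝ} (hμ : 0 < μ) (yk t : EuclideanSpace ℝ (Fin n))
    (hmin : IsMinOn (fun x => f x + ((μ / 2 * ‖x - yk‖ ^ 2 : ℝ) : EReal)) Set.univ t) :
    f t ≠ ⊤ ∧ ‖t - z‖ ^ 2 + ‖t - yk‖ ^ 2 ≤ ‖yk - z‖ ^ 2 ∧
      (f t).toReal ≤ (f z).toReal + μ * (‖t - yk‖ * ‖z - t‖) := by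
  set m : ℝ := (f z).toReal with hm
  have hfz : f z = (m : EReal) := (EReal.coe_toReal hzt (hbot z)).symm
  -- f t is finite
  have hminz := hmin (Set.mem_univ z)
  simp only [Set.mem_setOf_eq] at hminz
  have hflb : (m : EReal) ≤ f t := hfz ▸ hz (Set.mem_univ t)
  have hftop : f t ≠ ⊤ := by
    intro htop
    rw [htop, EReal.top_add_coe, hfz, ← EReal.coe_add] at hminz
    exact (EReal.coe_lt_top _).not_ge hminz
  set T : ℝ := (f t).toReal with hT
  have hft : f t = (T : EReal) := (EReal.coe_toReal hftop (hbot t)).symm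
  have hmT : m ≤ T := by rw [hft] at hflb; exact EReal.coe_le_coe_iff.1 hflb
  -- key inequality via convexity
  have hinner : T - m ≤ μ * (inner ℝ (t - yk) (z - t) : ℝ) := by
    apply aux_le_of_forall_small _ _ (μ / 2 * ‖z - t‖ ^ 2)
    intro s hs hs1
    set zs : EuclideanSpace ℝ (Fin n) := t + s • (z - t) with hzs
    have hzs2 : zs = (1 - s) • t + s • z := by
      simp only [hzs]; module
    have hcvx : f zs ≤ (((1 - s) * T + s * m : ℝ) : EReal) := by
      have hp : (t, T) ∈ {p : EuclideanSpace ℝ (Fin n) × ℝ | f p.1 ≤ (p.2 : EReal)} :=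
        le_of_eq hft
      have hq : (z, m) ∈ {p : EuclideanSpace ℝ (Fin n) × ℝ | f p.1 ≤ (p.2 : EReal)} :=
        le_of_eq hfz
      have := hconv hp hq (by linarith : (0:ℝ) ≤ 1 - s) (le_of_lt hs) (by ring)
      simpa [hzs2, Prod.smul_mk, smul_eq_mul] using this
    have hmins := hmin (Set.mem_univ zs)
    simp only [Set.mem_setOf_eq] at hmins
    rw [hft] at hmins
    have hchain : ((T + μ / 2 * ‖t - yk‖ ^ 2 : ℝ) : EReal)
        ≤ (((1 - s) * T + s * m + μ / 2 * ‖zs - yk‖ ^ 2 : ℝ) : EReal) := by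
      push_cast
      refine le_trans hmins ?_
      have h := add_le_add hcvx (le_refl ((μ / 2 * ‖zs - yk‖ ^ 2 : ℝ) : EReal))
      push_cast at h ⊢
      exact h
    rw [EReal.coe_le_coe_iff] at hchain
    -- expand the norm
    have hexp : ‖zs - yk‖ ^ 2 = ‖t - yk‖ ^ 2 + 2 * s * (inner ℝ (t - yk) (z - t) : ℝ)
        + s ^ 2 * ‖z - t‖ ^ 2 := by
      have h1 : zs - yk = (t - yk) + s • (z - t) := by simp only [hzs]; module
      rw [h1, norm_add_sq_real, real_inner_smul_right, norm_smul]
      simp [abs_of_pos hs, mul_pow]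
      ring
    rw [hexp] at hchain
    have h2 : s * (T - m) ≤ s * (μ * (inner ℝ (t - yk) (z - t) : ℝ) + s * (μ / 2 * ‖z - t‖ ^ 2)) := by
      nlinarith [hchain]
    have := (mul_le_mul_iff_right₀ hs).1 h2
    linarith
  have hinn0 : 0 ≤ (inner ℝ (t - yk) (z - t) : ℝ) := by
    have h1 : 0 ≤ μ * (inner ℝ (t - yk) (z - t) : ℝ) := le_trans (by linarith) hinner
    exact nonneg_of_mul_nonneg_right h1 hμ
  refine ⟨hftop, ?_, ?_⟩
  · have hsplit : yk - z = (yk - t) + (t - z) := by abel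
    have hexp2 : ‖yk - z‖ ^ 2 = ‖yk - t‖ ^ 2 + 2 * (inner ℝ (yk - t) (t - z) : ℝ)
        + ‖t - z‖ ^ 2 := by rw [hsplit, norm_add_sq_real]
    have hinn2 : (inner ℝ (yk - t) (t - z) : ℝ) = (inner ℝ (t - yk) (z - t) : ℝ) := by
      rw [show yk - t = -(t - yk) by abel, show t - z = -(z - t) by abel, inner_neg_neg]
    have hnn : ‖yk - t‖ = ‖t - yk‖ := norm_sub_rev _ _
    rw [hexp2, hinn2, hnn]
    linarith
  · have hCS := real_inner_le_norm (t - yk) (z - t)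
    nlinarith [hinner, hCS, hμ.le]
lemma aux_fejer {a ε : ℕ → ℝ} (ha : ∀ k, 0 ≤ a k) (hεnn : ∀ k, 0 ≤ ε k)
    (hsum : Summable ε) (hrec : ∀ k, a (k + 1) ≤ a k + ε k) :
    ∃ L, Filter.Tendsto a atTop (𝓝 L) ∧ ∀ k, a k ≤ a 0 + ∑' i, ε i := by
  set t : ℕ → ℝ := fun k => ∑' i, ε (i + k) with ht
  have hts : ∀ k, Summable fun i => ε (i + k) := fun k => (summable_nat_add_iff k).2 hsum
  have htnn : ∀ k, 0 ≤ t k := fun k => tsum_nonneg (fun i => hεnn _)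
  have hstep : ∀ k, t k = ε k + t (k + 1) := by
    intro k
    have h0 := Summable.tsum_eq_zero_add (hts k)
    have h2 : ∑' i, ε (i + 1 + k) = ∑' i, ε (i + (k + 1)) :=
      tsum_congr (fun i => by ring_nf)
    simpa [h2] using h0
  set b : ℕ → ℝ := fun k => a k + t k with hb
  have hanti : Antitone b := by
    apply antitone_nat_of_succ_le
    intro k
    have h3 := hrec k
    have h4 := hstep k
    simp only [hb]
    linarith
  have hbdd : BddBelow (Set.range b) := ⟨0, by rintro x ⟨k, rfl⟩; exact add_nonneg (ha k) (htnn k)⟩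
  have hbL : Filter.Tendsto b atTop (𝓝 (⨅ k, b k)) := tendsto_atTop_ciInf hanti hbdd
  have ht0 : Filter.Tendsto t atTop (𝓝 0) := by
    simpa [ht] using tendsto_sum_nat_add ε
  refine ⟨(⨅ k, b k) - 0, ?_, ?_⟩
  · have := hbL.sub ht0
    simpa [hb] using this
  · intro k
    have h1 : b k ≤ b 0 := hanti (Nat.zero_le k)
    have h5 : t 0 = ∑' i, ε i := by simp [ht]
    simp only [hb] at h1
    linarith [htnn k, h1]

/-- Rockafellar's convergence theorem for the inexact proximal point method:
if `f` is proper convex lsc with a minimizer, `0 < μ_k` with `limsup μ_k < ∞`,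
`Σ ε_k < ∞`, `ỹ_{k+1} = argmin_x f(x) + (μ_k/2)‖x - y_k‖²`, and
`‖y_{k+1} - ỹ_{k+1}‖ ≤ ε_k`, then `(y_k)` converges to a minimizer of `f`. -/
theorem inexact_proximal_point_converges {n : ℕ} (f : EuclideanSpace ℝ (Fin n) → EReal)
    (hconv : Convex ℝ {p : EuclideanSpace ℝ (Fin n) × ℝ | f p.1 ≤ (p.2 : EReal)})
    (hlsc : LowerSemicontinuous f)
    (hbot : ∀ x, f x ≠ ⊥)
    (xmin : EuclideanSpace ℝ (Fin n)) (hxmin : IsMinOn f Set.univ xmin)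
    (hxmin_ne_top : f xmin ≠ ⊤)
    (μs : ℕ → ℝ) (hμpos : ∀ k, 0 < μs k)
    (hμbdd : Filter.limsup (fun k => ((μs k : ℝ) : EReal)) Filter.atTop < ⊤)
    (ε : ℕ → ℝ) (hε : Summable ε)
    (y ty : ℕ → EuclideanSpace ℝ (Fin n))
    (hty : ∀ k, IsMinOn (fun x => f x + ((μs k / 2 * ‖x - y k‖ ^ 2 : ℝ) : EReal))
        Set.univ (ty k))
    (hyk : ∀ k, ‖y (k + 1) - ty k‖ ≤ ε k) :
    ∃ ystar, IsMinOn f Set.univ ystar ∧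
      Filter.Tendsto y Filter.atTop (nhds ystar) := by
  have hεnn : ∀ k, 0 ≤ ε k := fun k => le_trans (norm_nonneg _) (hyk k)
  set m : ℝ := (f xmin).toReal with hm
  -- machinery for an arbitrary finite-valued minimizer z
  have step : ∀ (z : EuclideanSpace ℝ (Fin n)), IsMinOn f Set.univ z → f z ≠ ⊤ → ∀ k,
      f (ty k) ≠ ⊤ ∧ ‖ty k - z‖ ^ 2 + ‖ty k - y k‖ ^ 2 ≤ ‖y k - z‖ ^ 2 ∧
      (f (ty k)).toReal ≤ (f z).toReal + μs k * (‖ty k - y k‖ * ‖z - ty k‖) :=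
    fun z hz hzt k => aux_prox_step f hconv hbot hz hzt (hμpos k) (y k) (ty k) (hty k)
  have hne : ∀ (z : EuclideanSpace ℝ (Fin n)), IsMinOn f Set.univ z → f z ≠ ⊤ → ∀ k,
      ‖ty k - z‖ ≤ ‖y k - z‖ := by
    intro z hz hzt k
    obtain ⟨-, hfirm, -⟩ := step z hz hzt k
    have h1 : ‖ty k - z‖ ^ 2 ≤ ‖y k - z‖ ^ 2 := by nlinarith [sq_nonneg ‖ty k - y k‖]
    have h2 := Real.sqrt_le_sqrt h1
    rwa [Real.sqrt_sq (norm_nonneg _), Real.sqrt_sq (norm_nonneg _)] at h2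
  have hrec : ∀ (z : EuclideanSpace ℝ (Fin n)), IsMinOn f Set.univ z → f z ≠ ⊤ → ∀ k,
      ‖y (k + 1) - z‖ ≤ ‖y k - z‖ + ε k := by
    intro z hz hzt k
    have h1 := norm_sub_le_norm_sub_add_norm_sub (y (k + 1)) (ty k) z
    have h2 := hne z hz hzt k
    have h3 := hyk k
    linarith
  obtain ⟨L, hL, hbound⟩ := aux_fejer (a := fun k => ‖y k - xmin‖) (fun k => norm_nonneg _) hεnn hε
    (hrec xmin hxmin hxmin_ne_top)
  set C : ℝ := ‖y 0 - xmin‖ + ∑' i, ε i with hC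
  have hε0 : Filter.Tendsto ε atTop (𝓝 0) := hε.tendsto_atTop_zero
  have hAsucc : Filter.Tendsto (fun k => ‖y (k + 1) - xmin‖) atTop (𝓝 L) :=
    hL.comp (tendsto_add_atTop_nat 1)
  -- ‖ty k - xmin‖ → L
  have hWlow : ∀ k, ‖y (k + 1) - xmin‖ - ε k ≤ ‖ty k - xmin‖ := by
    intro k
    have h1 := norm_sub_le_norm_sub_add_norm_sub (y (k + 1)) (ty k) xmin
    have h3 := hyk k
    linarith
  have hWlim : Filter.Tendsto (fun k => ‖ty k - xmin‖) atTop (𝓝 L) := by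
    have hlow : Filter.Tendsto (fun k => ‖y (k + 1) - xmin‖ - ε k) atTop (𝓝 (L - 0)) :=
      hAsucc.sub hε0
    rw [sub_zero] at hlow
    exact tendsto_of_tendsto_of_tendsto_of_le_of_le hlow hL hWlow
      (fun k => hne xmin hxmin hxmin_ne_top k)
  -- ‖ty k - y k‖ → 0
  have hsq : Filter.Tendsto (fun k => ‖ty k - y k‖ ^ 2) atTop (𝓝 0) := by
    have hup : ∀ k, ‖ty k - y k‖ ^ 2 ≤ ‖y k - xmin‖ ^ 2 - ‖ty k - xmin‖ ^ 2 := by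
      intro k
      obtain ⟨-, hfirm, -⟩ := step xmin hxmin hxmin_ne_top k
      linarith
    have hlim2 : Filter.Tendsto (fun k => ‖y k - xmin‖ ^ 2 - ‖ty k - xmin‖ ^ 2) atTop
        (𝓝 (L ^ 2 - L ^ 2)) := (hL.pow 2).sub (hWlim.pow 2)
    rw [sub_self] at hlim2
    exact tendsto_of_tendsto_of_tendsto_of_le_of_le tendsto_const_nhds hlim2
      (fun k => sq_nonneg _) hup
  have hD : Filter.Tendsto (fun k => ‖ty k - y k‖) atTop (𝓝 0) := by
    have h1 : Filter.Tendsto (fun k => Real.sqrt (‖ty k - y k‖ ^ 2)) atTop (𝓝 (Real.sqrt 0)) :=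
      (Real.continuous_sqrt.tendsto 0).comp hsq
    simpa [Real.sqrt_sq, norm_nonneg] using h1
  -- bound on μs
  obtain ⟨M, hM1, -⟩ := EReal.exists_between_coe_real hμbdd
  have hMev : ∀ᶠ k in Filter.atTop, μs k < M := by
    filter_upwards [Filter.eventually_lt_of_limsup_lt hM1] with k hk
    exact_mod_cast hk
  -- f (ty k) → m
  have hWlim' : Filter.Tendsto (fun k => ‖xmin - ty k‖) atTop (𝓝 L) := by
    simpa [norm_sub_rev] using hWlim
  have hprod : Filter.Tendsto (fun k => μs k * (‖ty k - y k‖ * ‖xmin - ty k‖)) atTop (𝓝 0) := by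
    have hg : Filter.Tendsto (fun k => M * (‖ty k - y k‖ * ‖xmin - ty k‖)) atTop
        (𝓝 (M * (0 * L))) := tendsto_const_nhds.mul (hD.mul hWlim')
    rw [zero_mul, mul_zero] at hg
    refine squeeze_zero' ?_ ?_ hg
    · exact Filter.Eventually.of_forall fun k =>
        mul_nonneg (hμpos k).le (mul_nonneg (norm_nonneg _) (norm_nonneg _))
    · filter_upwards [hMev] with k hk
      exact mul_le_mul_of_nonneg_right hk.le (mul_nonneg (norm_nonneg _) (norm_nonneg _))
  have hFub : ∀ k, (f (ty k)).toReal ≤ m + μs k * (‖ty k - y k‖ * ‖xmin - ty k‖) :=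
    fun k => (step xmin hxmin hxmin_ne_top k).2.2
  have hFlb : ∀ k, m ≤ (f (ty k)).toReal := by
    intro k
    exact EReal.toReal_le_toReal (hxmin (Set.mem_univ (ty k))) (hbot xmin)
      (step xmin hxmin hxmin_ne_top k).1
  have hF : Filter.Tendsto (fun k => (f (ty k)).toReal) atTop (𝓝 m) := by
    have hup : Filter.Tendsto (fun k => m + μs k * (‖ty k - y k‖ * ‖xmin - ty k‖)) atTop
        (𝓝 (m + 0)) := tendsto_const_nhds.add hprod
    rw [add_zero] at hup
    exact tendsto_of_tendsto_of_tendsto_of_le_of_le tendsto_const_nhds hup hFlb hFub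
  -- convergent subsequence
  have hmem : ∀ k, y k ∈ Metric.closedBall xmin C := by
    intro k
    rw [Metric.mem_closedBall, dist_eq_norm]
    exact hbound k
  obtain ⟨yinf, -, φ, hφmono, hφlim⟩ :=
    tendsto_subseq_of_bounded Metric.isBounded_closedBall hmem
  have hφtop : Filter.Tendsto φ atTop atTop := hφmono.tendsto_atTop
  -- ty ∘ φ → yinf
  have hdiff0 : Filter.Tendsto (fun k => ty k - y k) atTop (𝓝 0) :=
    tendsto_zero_iff_norm_tendsto_zero.2 hD
  have htylim : Filter.Tendsto (fun j => ty (φ j)) atTop (𝓝 yinf) := by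
    have h1 := hφlim.add (hdiff0.comp hφtop)
    rw [add_zero] at h1
    have h2 : (fun j => ty (φ j)) = fun j => (y ∘ φ) j + ((fun k => ty k - y k) ∘ φ) j := by
      funext j; simp [Function.comp]
    rw [h2]
    exact h1
  -- yinf is a minimizer by lower semicontinuity
  have hfyinf : f yinf ≤ (m : EReal) := by
    by_contra h
    push_neg at h
    obtain ⟨c, hc1, hc2⟩ := exists_between h
    have hcne : c ≠ ⊤ := (lt_of_lt_of_le hc2 le_top).ne
    have hcbot : c ≠ ⊥ := (lt_trans (EReal.bot_lt_coe m) hc1).ne'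
    set c' : ℝ := c.toReal with hc'
    have hcc : c = (c' : EReal) := (EReal.coe_toReal hcne hcbot).symm
    have hev := htylim.eventually (hlsc yinf c hc2)
    have hFφ : Filter.Tendsto (fun j => (f (ty (φ j))).toReal) atTop (𝓝 m) :=
      hF.comp hφtop
    have hmc : m < c' := by rw [hcc, EReal.coe_lt_coe_iff] at hc1; exact hc1
    have hlt : ∀ᶠ j in Filter.atTop, (f (ty (φ j))).toReal < c' :=
      hFφ.eventually (gt_mem_nhds hmc)
    obtain ⟨j, h1, h2⟩ := (hev.and hlt).exists
    have hfin : f (ty (φ j)) = (((f (ty (φ j))).toReal : ℝ) : EReal) :=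
      (EReal.coe_toReal (step xmin hxmin hxmin_ne_top (φ j)).1 (hbot _)).symm
    rw [hfin, hcc, gt_iff_lt, EReal.coe_lt_coe_iff] at h1
    linarith
  have hyinfmin : IsMinOn f Set.univ yinf := by
    intro x _
    calc f yinf ≤ (m : EReal) := hfyinf
      _ = f xmin := (EReal.coe_toReal hxmin_ne_top (hbot xmin)).symm ▸ rfl
      _ ≤ f x := hxmin (Set.mem_univ x)
  have hyinftop : f yinf ≠ ⊤ := (lt_of_le_of_lt hfyinf (EReal.coe_lt_top m)).ne
  -- Fejér w.r.t. yinf finishes the proof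
  obtain ⟨L', hL', -⟩ := aux_fejer (a := fun k => ‖y k - yinf‖) (fun k => norm_nonneg _)
    hεnn hε (hrec yinf hyinfmin hyinftop)
  have hsub0 : Filter.Tendsto (fun j => ‖y (φ j) - yinf‖) atTop (𝓝 0) :=
    tendsto_iff_norm_sub_tendsto_zero.1 hφlim
  have hsubL : Filter.Tendsto (fun j => ‖y (φ j) - yinf‖) atTop (𝓝 L') :=
    hL'.comp hφtop
  have hL0 : L' = 0 := tendsto_nhds_unique hsubL hsub0
  rw [hL0] at hL'
  exact ⟨yinf, hyinfmin, tendsto_iff_norm_sub_tendsto_zero.2 hL'⟩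
end

section
/- Let f be proper convex lsc on ℝ^n with unique minimizer x⋆, and suppose ∂f^{-1} is locally Lipschitz at 0 with constant a: there exists r > 0 such that ‖w‖ ≤ r and x ∈ ∂f^{-1}(w) imply ‖x − x⋆‖ ≤ a‖w‖. Fix μ > 0 and let γ = a/√(a² + μ^{-2}) < 1. Consider the inexact proximal point iteration ỹ_{k+1} = argmin_x f(x) + (μ/2)‖x−y_k‖², with y_{k+1} satisfying ‖y_{k+1} − ỹ_{k+1}‖ ≤ (γ/2)^k. Then there exist k₀ and constant C such that ‖y_k − x⋆‖ ≤ C γ^k for all k ≥ k₀; i.e., (y_k) converges linearly to x⋆ with rate γ. -/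
open scoped RealInnerProductSpace
open Filter Topology

lemma subgrad_of_prox {n : ℕ} (f : EuclideanSpace ℝ (Fin n) → EReal)
    (hconv : Convex ℝ {p : EuclideanSpace ℝ (Fin n) × ℝ | f p.1 ≤ (p.2 : EReal)})
    (hbot : ∀ x, f x ≠ ⊥)
    (μ : ℝ) (hμ : 0 < μ) (yk tyk : EuclideanSpace ℝ (Fin n))
    (hmin : IsMinOn (fun x => f x + ((μ / 2 * ‖x - yk‖ ^ 2 : ℝ) : EReal)) Set.univ tyk)
    (hfin : f tyk ≠ ⊤) :
    ∀ z, f tyk + ((⟪μ • (yk - tyk), z - tyk⟫ : ℝ) : EReal) ≤ f z := by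
  intro z
  by_cases hz : f z = ⊤
  · rw [hz]; exact le_top
  set b := (f tyk).toReal with hbdef
  have hb : f tyk = (b : EReal) := (EReal.coe_toReal hfin (hbot tyk)).symm
  set c := (f z).toReal with hcdef
  have hc : f z = (c : EReal) := (EReal.coe_toReal hz (hbot z)).symm
  set I : ℝ := ⟪tyk - yk, z - tyk⟫ with hI
  set N : ℝ := ‖z - tyk‖ ^ 2 with hN
  have hN0 : 0 ≤ N := by positivity
  have hkey : ∀ t : ℝ, 0 < t → t ≤ 1 → b ≤ c + μ * I + μ * t / 2 * N := by
    intro t ht ht1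
    set zt := tyk + t • (z - tyk) with hzt
    -- convexity
    have h1 : ((tyk, b) : EuclideanSpace ℝ (Fin n) × ℝ) ∈
        {p : EuclideanSpace ℝ (Fin n) × ℝ | f p.1 ≤ (p.2 : EReal)} := by
      simp only [Set.mem_setOf_eq]; exact le_of_eq hb
    have h2 : ((z, c) : EuclideanSpace ℝ (Fin n) × ℝ) ∈
        {p : EuclideanSpace ℝ (Fin n) × ℝ | f p.1 ≤ (p.2 : EReal)} := by
      simp only [Set.mem_setOf_eq]; exact le_of_eq hc
    have hmem := hconv h1 h2 (by linarith : (0:ℝ) ≤ 1 - t) ht.le (by ring)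
    simp only [Prod.smul_mk, Prod.mk_add_mk, smul_eq_mul, Set.mem_setOf_eq] at hmem
    have hfst : (1 - t) • tyk + t • z = zt := by
      rw [hzt]; module
    rw [hfst] at hmem
    -- min property at zt
    have hmin' := isMinOn_iff.1 hmin zt (Set.mem_univ _)
    have hchain : ((b + μ / 2 * ‖tyk - yk‖ ^ 2 : ℝ) : EReal) ≤
        (((1 - t) * b + t * c + μ / 2 * ‖zt - yk‖ ^ 2 : ℝ) : EReal) := by
      push_cast
      calc ((b : EReal) + ((μ / 2 * ‖tyk - yk‖ ^ 2 : ℝ) : EReal))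
          ≤ f zt + ((μ / 2 * ‖zt - yk‖ ^ 2 : ℝ) : EReal) := by rw [← hb]; exact hmin'
        _ ≤ (((1 - t) * b + t * c : ℝ) : EReal) + ((μ / 2 * ‖zt - yk‖ ^ 2 : ℝ) : EReal) :=
            add_le_add_left hmem _
        _ = ((1 - t) * b : EReal) + (t * c : EReal) + ((μ / 2 * ‖zt - yk‖ ^ 2 : ℝ) : EReal) := by
            push_cast; ring_nf
    have hrr : b + μ / 2 * ‖tyk - yk‖ ^ 2 ≤ (1 - t) * b + t * c + μ / 2 * ‖zt - yk‖ ^ 2 :=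
      EReal.coe_le_coe_iff.1 hchain
    have hexp : ‖zt - yk‖ ^ 2 = ‖tyk - yk‖ ^ 2 + 2 * (t * I) + t ^ 2 * N := by
      have : zt - yk = (tyk - yk) + t • (z - tyk) := by rw [hzt]; abel
      rw [this, @norm_add_sq_real, real_inner_smul_right, norm_smul]
      simp [hI, hN, abs_of_pos ht]
      ring
    rw [hexp] at hrr
    have h3 : t * b ≤ t * (c + μ * I + μ * t / 2 * N) := by nlinarith
    exact le_of_mul_le_mul_left h3 ht
  have hinner : (⟪μ • (yk - tyk), z - tyk⟫ : ℝ) = -(μ * I) := by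
    rw [real_inner_smul_left, hI]
    have : (yk - tyk) = -(tyk - yk) := by abel
    rw [this, inner_neg_left]
    ring
  rw [hb, hc, hinner]
  rw [show ((b:ℝ):EReal) + ((-(μ*I) : ℝ) : EReal) = ((b + -(μ*I) : ℝ) : EReal) by push_cast; ring]
  rw [EReal.coe_le_coe_iff]
  have : ∀ ε : ℝ, 0 < ε → b + -(μ * I) ≤ c + ε := by
    intro ε hε
    have hden : 0 < μ / 2 * N + 1 := by positivity
    set t := min 1 (ε / (μ / 2 * N + 1)) with htdef
    have ht0 : 0 < t := lt_min one_pos (by positivity)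
    have ht1 : t ≤ 1 := min_le_left _ _
    have h4 := hkey t ht0 ht1
    have h5 : t ≤ ε / (μ / 2 * N + 1) := min_le_right _ _
    have h6 : μ * t / 2 * N ≤ ε := by
      have := (le_div_iff₀ hden).1 h5
      nlinarith
    linarith
  exact le_of_forall_pos_le_add this

lemma sqrt_contract (c s r d : ℝ) (hc : 0 ≤ c) (hs : 0 ≤ s) (hd : 0 ≤ d)
    (h1 : s ^ 2 + r ^ 2 ≤ d ^ 2) (h2 : s ≤ c * r) :
    s ≤ c / Real.sqrt (c ^ 2 + 1) * d := by
  have hS0 : 0 < Real.sqrt (c ^ 2 + 1) := Real.sqrt_pos.2 (by positivity)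
  have hS2 : Real.sqrt (c ^ 2 + 1) ^ 2 = c ^ 2 + 1 := Real.sq_sqrt (by positivity)
  rw [div_mul_eq_mul_div, le_div_iff₀ hS0]
  have hsq : (s * Real.sqrt (c ^ 2 + 1)) ^ 2 ≤ (c * d) ^ 2 := by nlinarith
  have h3 : s * Real.sqrt (c ^ 2 + 1) = Real.sqrt ((s * Real.sqrt (c ^ 2 + 1)) ^ 2) :=
    (Real.sqrt_sq (by positivity)).symm
  rw [h3]
  calc Real.sqrt ((s * Real.sqrt (c ^ 2 + 1)) ^ 2) ≤ Real.sqrt ((c * d) ^ 2) :=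
        Real.sqrt_le_sqrt hsq
    _ = c * d := Real.sqrt_sq (by positivity)

lemma gamma_eq (a μ : ℝ) (ha : 0 ≤ a) (hμ : 0 < μ) :
    a / Real.sqrt (a ^ 2 + (μ ^ 2)⁻¹) = (a * μ) / Real.sqrt ((a * μ) ^ 2 + 1) := by
  have h1 : a ^ 2 + (μ ^ 2)⁻¹ = ((a * μ) ^ 2 + 1) * (μ ^ 2)⁻¹ := by
    field_simp
  rw [h1, Real.sqrt_mul (by positivity), Real.sqrt_inv, Real.sqrt_sq hμ.le]
  rw [div_mul_eq_div_div_swap, div_inv_eq_mul]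

lemma gamma_lt_one (c : ℝ) (hc : 0 ≤ c) : c / Real.sqrt (c ^ 2 + 1) < 1 := by
  have hS0 : 0 < Real.sqrt (c ^ 2 + 1) := Real.sqrt_pos.2 (by positivity)
  rw [div_lt_one hS0]
  calc c = Real.sqrt (c ^ 2) := (Real.sqrt_sq hc).symm
    _ < Real.sqrt (c ^ 2 + 1) := by
        apply Real.sqrt_lt_sqrt (by positivity); linarith

lemma rate_step (g p X t q : ℝ) (hg : g ≠ 0) :
    g * (q * (X + 2 * p / g * (1 - t))) + p * (q * t) =
    g * q * (X + 2 * p / g * (1 - 2⁻¹ * t)) := by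
  field_simp
  ring


/-- Local linear convergence of the inexact proximal point method under the
local Lipschitz condition on `(∂f)⁻¹` at `0`: with `γ = a/√(a² + μ⁻²)`, if
`‖y_{k+1} - ỹ_{k+1}‖ ≤ (γ/2)^k`, then `‖y_k - x⋆‖ ≤ C γ^k` for all large `k`. -/
theorem inexact_proximal_point_linear_rate {n : ℕ} (f : EuclideanSpace ℝ (Fin n) → EReal)
    (hconv : Convex ℝ {p : EuclideanSpace ℝ (Fin n) × ℝ | f p.1 ≤ (p.2 : EReal)})
    (hlsc : LowerSemicontinuous f)
    (hbot : ∀ x, f x ≠ ⊥)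
    (xstar : EuclideanSpace ℝ (Fin n)) (hxs : IsMinOn f Set.univ xstar)
    (hxs_ne_top : f xstar ≠ ⊤)
    (huniq : ∀ x, IsMinOn f Set.univ x → x = xstar)
    (a : ℝ) (ha : 0 ≤ a)
    (hlip : ∃ r > (0 : ℝ), ∀ (w x : EuclideanSpace ℝ (Fin n)), ‖w‖ ≤ r →
        (∀ z, f x + ((⟪w, z - x⟫ : ℝ) : EReal) ≤ f z) → ‖x - xstar‖ ≤ a * ‖w‖)
    (μ : ℝ) (hμ : 0 < μ)
    (y ty : ℕ → EuclideanSpace ℝ (Fin n))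
    (hty : ∀ k, IsMinOn (fun x => f x + ((μ / 2 * ‖x - y k‖ ^ 2 : ℝ) : EReal))
        Set.univ (ty k))
    (hyk : ∀ k, ‖y (k + 1) - ty k‖ ≤ (a / Real.sqrt (a ^ 2 + (μ ^ 2)⁻¹) / 2) ^ k) :
    ∃ (k₀ : ℕ) (C : ℝ), 0 ≤ C ∧ ∀ k ≥ k₀,
      ‖y k - xstar‖ ≤ C * (a / Real.sqrt (a ^ 2 + (μ ^ 2)⁻¹)) ^ k := by
  obtain ⟨r, hr, hlip'⟩ := hlip
  set γ := a / Real.sqrt (a ^ 2 + (μ ^ 2)⁻¹) with hγdef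
  set c := a * μ with hcdef
  have hc0 : 0 ≤ c := by positivity
  have hγ : γ = c / Real.sqrt (c ^ 2 + 1) := gamma_eq a μ ha hμ
  have hγ0 : 0 ≤ γ := div_nonneg ha (Real.sqrt_nonneg _)
  have hγ1 : γ < 1 := hγ ▸ gamma_lt_one c hc0
  -- f (ty k) is finite
  have hfxs : f xstar = ((f xstar).toReal : EReal) :=
    (EReal.coe_toReal hxs_ne_top (hbot xstar)).symm
  have hfin : ∀ k, f (ty k) ≠ ⊤ := by
    intro k htop
    have h1 := isMinOn_iff.1 (hty k) xstar (Set.mem_univ _)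
    simp only [htop] at h1
    rw [EReal.top_add_of_ne_bot (by exact EReal.coe_ne_bot _)] at h1
    have h2 : f xstar + ((μ / 2 * ‖xstar - y k‖ ^ 2 : ℝ) : EReal) ≠ ⊤ := by
      rw [hfxs, ← EReal.coe_add]
      exact EReal.coe_ne_top _
    exact h2 (top_le_iff.1 h1)
  have hsub : ∀ k z, f (ty k) + ((⟪μ • (y k - ty k), z - ty k⟫ : ℝ) : EReal) ≤ f z :=
    fun k => subgrad_of_prox f hconv hbot μ hμ (y k) (ty k) (hty k) (hfin k)
  -- firm nonexpansiveness inequality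
  have hfirm : ∀ k, ‖ty k - xstar‖ ^ 2 + ‖y k - ty k‖ ^ 2 ≤ ‖y k - xstar‖ ^ 2 := by
    intro k
    have hb : f (ty k) = ((f (ty k)).toReal : EReal) :=
      (EReal.coe_toReal (hfin k) (hbot (ty k))).symm
    have h1 := hsub k xstar
    have h2 := isMinOn_iff.1 hxs (ty k) (Set.mem_univ _)
    rw [hb, hfxs, ← EReal.coe_add, EReal.coe_le_coe_iff] at h1
    rw [hfxs, hb, EReal.coe_le_coe_iff] at h2
    have hJ : (⟪μ • (y k - ty k), xstar - ty k⟫ : ℝ) ≤ 0 := by linarith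
    rw [real_inner_smul_left] at hJ
    have hJ2 : (⟪y k - ty k, xstar - ty k⟫ : ℝ) ≤ 0 := by
      nlinarith
    have hexp : ‖y k - xstar‖ ^ 2 =
        ‖y k - ty k‖ ^ 2 + 2 * ⟪y k - ty k, ty k - xstar⟫ + ‖ty k - xstar‖ ^ 2 := by
      rw [show y k - xstar = (y k - ty k) + (ty k - xstar) by abel, @norm_add_sq_real]
    have hflip : (⟪y k - ty k, ty k - xstar⟫ : ℝ) = -⟪y k - ty k, xstar - ty k⟫ := by
      rw [show ty k - xstar = -(xstar - ty k) by abel, inner_neg_right]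
    nlinarith
  have hd0 : ∀ k, (0:ℝ) ≤ ‖y k - xstar‖ := fun k => norm_nonneg _
  -- contraction when residual is small
  have hcontr : ∀ k, μ * ‖y k - ty k‖ ≤ r → ‖ty k - xstar‖ ≤ γ * ‖y k - xstar‖ := by
    intro k hk
    have hw : ‖μ • (y k - ty k)‖ = μ * ‖y k - ty k‖ := by
      rw [norm_smul, Real.norm_eq_abs, abs_of_pos hμ]
    have h1 := hlip' (μ • (y k - ty k)) (ty k) (by rw [hw]; exact hk) (hsub k)
    rw [hw, ← mul_assoc] at h1
    rw [hγ]
    exact sqrt_contract c _ _ _ hc0 (norm_nonneg _) (hd0 k) (hfirm k) h1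
  -- basic recursions
  have hd1 : ∀ k, ‖y (k+1) - xstar‖ ≤ ‖ty k - xstar‖ + (γ/2)^k := by
    intro k
    have h1 := norm_add_le (y (k+1) - ty k) (ty k - xstar)
    rw [sub_add_sub_cancel] at h1
    have h2 := hyk k
    linarith
  have hsd : ∀ k, ‖ty k - xstar‖ ≤ ‖y k - xstar‖ := by
    intro k
    nlinarith [hfirm k, norm_nonneg (ty k - xstar), hd0 k, sq_nonneg (‖y k - ty k‖)]
  have hεpos : ∀ k, (0:ℝ) ≤ (γ/2)^k := fun k => pow_nonneg (by linarith) k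
  have hmono : ∀ k, ‖y (k+1) - xstar‖ ≤ ‖y k - xstar‖ + (γ/2)^k := by
    intro k; have := hd1 k; have := hsd k; linarith
  -- convergence of residuals to 0
  set u : ℕ → ℝ := fun k => ‖y k - xstar‖ + 2 * (γ/2)^k with hudef
  have hant : Antitone u := by
    apply antitone_nat_of_succ_le
    intro k
    have h1 := hmono k
    have h2 : (γ/2)^(k+1) = (γ/2) * (γ/2)^k := by ring
    have := hεpos k
    simp only [hudef]
    nlinarith
  have hbdd : BddBelow (Set.range u) := by
    refine ⟨0, ?_⟩
    rintro x ⟨k, rfl⟩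
    have := hd0 k; have := hεpos k
    simp only [hudef]; positivity
  set L := ⨅ k, u k with hLdef
  have huL : Tendsto u atTop (𝓝 L) := tendsto_atTop_ciInf hant hbdd
  have hpow0 : Tendsto (fun k : ℕ => (γ/2)^k) atTop (𝓝 0) := by
    apply tendsto_pow_atTop_nhds_zero_of_lt_one (by linarith) (by linarith)
  have hdL : Tendsto (fun k => ‖y k - xstar‖) atTop (𝓝 L) := by
    have h1 : Tendsto (fun k => u k - 2 * (γ/2)^k) atTop (𝓝 (L - 2 * 0)) :=
      huL.sub (hpow0.const_mul 2)
    simp only [mul_zero, sub_zero] at h1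
    exact h1.congr (fun k => by simp only [hudef]; ring)
  have hsL : Tendsto (fun k => ‖ty k - xstar‖) atTop (𝓝 L) := by
    have hlow : Tendsto (fun k => ‖y (k+1) - xstar‖ - (γ/2)^k) atTop (𝓝 (L - 0)) := by
      exact (hdL.comp (tendsto_add_atTop_nat 1)).sub hpow0
    rw [sub_zero] at hlow
    exact tendsto_of_tendsto_of_tendsto_of_le_of_le hlow hdL
      (fun k => by have := hd1 k; simp only [Function.comp_def]; linarith) hsd
  have hRL : Tendsto (fun k => ‖y k - ty k‖) atTop (𝓝 0) := by
    have h1 : Tendsto (fun k => ‖y k - xstar‖^2 - ‖ty k - xstar‖^2) atTop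
        (𝓝 (L^2 - L^2)) := (hdL.pow 2).sub (hsL.pow 2)
    rw [sub_self] at h1
    have h2 : Tendsto (fun k => Real.sqrt (‖y k - xstar‖^2 - ‖ty k - xstar‖^2)) atTop
        (𝓝 0) := by
      have := (Real.continuous_sqrt.tendsto 0).comp h1
      simpa [Real.sqrt_zero, Function.comp_def] using this
    apply squeeze_zero (fun k => norm_nonneg _) (fun k => ?_) h2
    rw [show ‖y k - ty k‖ = Real.sqrt (‖y k - ty k‖^2) from (Real.sqrt_sq (norm_nonneg _)).symm]
    apply Real.sqrt_le_sqrt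
    have := hfirm k; linarith
  -- eventually residual small
  obtain ⟨K, hK⟩ : ∃ K, ∀ k ≥ K, μ * ‖y k - ty k‖ ≤ r := by
    obtain ⟨K, hK⟩ := Metric.tendsto_atTop.1 hRL (r/μ) (div_pos hr hμ)
    refine ⟨K, fun k hk => ?_⟩
    have := hK k hk
    rw [Real.dist_eq, sub_zero, abs_of_nonneg (norm_nonneg _)] at this
    have := (lt_div_iff₀ hμ).1 this
    nlinarith
  have hrec : ∀ k, K ≤ k → ‖y (k+1) - xstar‖ ≤ γ * ‖y k - xstar‖ + (γ/2)^k := by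
    intro k hk
    have h1 := hcontr k (hK k hk)
    have h2 := hd1 k
    linarith
  rcases eq_or_lt_of_le hγ0 with hγz | hγpos
  · -- γ = 0
    refine ⟨K + 2, 1, zero_le_one, fun k hk => ?_⟩
    obtain ⟨j, rfl⟩ : ∃ j, k = j + 1 := ⟨k - 1, by omega⟩
    have hj : K ≤ j := by omega
    have h1 := hrec j hj
    rw [← hγz] at h1
    have h2 : ((0:ℝ)/2)^j = 0 := by
      rw [zero_div]; exact zero_pow (by omega)
    rw [← hγz, zero_pow (by omega : j + 1 ≠ 0), mul_zero]
    rw [h2] at h1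
    have := hd0 (j+1)
    linarith
  · -- γ > 0
    set B := 2 * (γ/2)^K / γ with hBdef
    have hB0 : 0 ≤ B := by positivity
    have hclaim : ∀ m, ‖y (K + m) - xstar‖ ≤
        γ ^ m * (‖y K - xstar‖ + B * (1 - (2⁻¹:ℝ)^m)) := by
      intro m
      induction m with
      | zero => simp
      | succ m ih =>
        have h1 := hrec (K + m) (Nat.le_add_right K m)
        have e1 : (γ/2)^(K+m) = (γ/2)^K * (γ^m * (2⁻¹:ℝ)^m) := by
          rw [pow_add]; congr 1
          rw [div_eq_mul_inv, mul_pow]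
        have h2 : γ * (γ ^ m * (‖y K - xstar‖ + B * (1 - (2⁻¹:ℝ)^m))) +
            (γ/2)^K * (γ^m * (2⁻¹:ℝ)^m) =
            γ ^ (m+1) * (‖y K - xstar‖ + B * (1 - (2⁻¹:ℝ)^(m+1))) := by
          rw [hBdef, pow_succ' γ m, pow_succ' (2⁻¹:ℝ) m]
          exact rate_step γ ((γ/2)^K) _ _ _ (ne_of_gt hγpos)
        have h3 : γ * ‖y (K + m) - xstar‖ ≤
            γ * (γ ^ m * (‖y K - xstar‖ + B * (1 - (2⁻¹:ℝ)^m))) :=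
          mul_le_mul_of_nonneg_left ih hγ0
        rw [show K + (m + 1) = (K + m) + 1 by omega]
        calc ‖y (K + m + 1) - xstar‖ ≤ γ * ‖y (K + m) - xstar‖ + (γ/2)^(K+m) := h1
          _ ≤ γ * (γ ^ m * (‖y K - xstar‖ + B * (1 - (2⁻¹:ℝ)^m))) +
              (γ/2)^K * (γ^m * (2⁻¹:ℝ)^m) := by rw [e1] at h1 ⊢; linarith
          _ = γ ^ (m+1) * (‖y K - xstar‖ + B * (1 - (2⁻¹:ℝ)^(m+1))) := h2
    refine ⟨K, (‖y K - xstar‖ + B) / γ ^ K, by positivity, fun k hk => ?_⟩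
    obtain ⟨m, rfl⟩ : ∃ m, k = K + m := ⟨k - K, by omega⟩
    have h1 := hclaim m
    have h2 : γ ^ m * (‖y K - xstar‖ + B * (1 - (2⁻¹:ℝ)^m)) ≤
        γ ^ m * (‖y K - xstar‖ + B) := by
      apply mul_le_mul_of_nonneg_left _ (pow_nonneg hγ0 m)
      have : (0:ℝ) ≤ (2⁻¹:ℝ)^m := by positivity
      nlinarith
    have h3 : (‖y K - xstar‖ + B) / γ ^ K * γ ^ (K + m) =
        γ ^ m * (‖y K - xstar‖ + B) := by
      rw [pow_add]
      field_simp
    rw [h3]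
    linarith
end

section
/- (Primal recovery bound.) Let Φ be μ-strongly convex, proper, lsc on ℝ^n; Ψ proper convex lsc on ℝ^m; L: ℝ^n → ℝ^m linear. Consider the primal problem min_x Φ(x) + Ψ(Lx) with unique solution x⋆, and the dual objective q(z) = Φ*(L*z) + Ψ*(−z). Assume strong duality holds (zero duality gap). Then for any dual point z, the point x(z) = ∇Φ*(L*z) satisfies (μ/2)‖x(z) − x⋆‖² ≤ q(z) − min_z q(z). -/
open scoped RealInnerProductSpace

/-- Fenchel conjugate of an extended-real-valued function on an inner product space. -/
noncomputable def fconj {E : Type*} [NormedAddCommGroup E] [InnerProductSpace ℝ E]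
    (f : E → EReal) (y : E) : EReal := ⨆ x, ((⟪x, y⟫ : ℝ) : EReal) - f x

private lemma exists_coe_of_ne {x : EReal} (ht : x ≠ ⊤) (hb : x ≠ ⊥) : ∃ r : ℝ, x = (r : EReal) := by
  lift x to ℝ using ⟨ht, hb⟩
  exact ⟨x, rfl⟩

private lemma fconj_ne_bot {E : Type*} [NormedAddCommGroup E] [InnerProductSpace ℝ E]
    (f : E → EReal) (htop : ∃ x, f x ≠ ⊤) (y : E) : fconj f y ≠ ⊥ := by
  obtain ⟨x0, hx0⟩ := htop
  have h1 : ((⟪x0, y⟫ : ℝ) : EReal) - f x0 ≤ fconj f y := by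
    rw [fconj]; exact le_iSup (fun x => ((⟪x, y⟫ : ℝ) : EReal) - f x) x0
  intro h
  rw [h, le_bot_iff] at h1
  rw [sub_eq_add_neg, EReal.add_eq_bot_iff] at h1
  rcases h1 with h1 | h1
  · exact EReal.coe_ne_bot _ h1
  · exact hx0 (EReal.neg_eq_bot_iff.mp h1)

/-- Strong-convexity inequality at a minimizer of `Φ - ⟨·, a⟩`, real version. -/
private lemma sc_key {n : ℕ} (Φ : EuclideanSpace ℝ (Fin n) → EReal)
    (hΦbot : ∀ x, Φ x ≠ ⊥) (μ : ℝ) (hμ : 0 < μ)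
    (hΦsc : Convex ℝ {p : EuclideanSpace ℝ (Fin n) × ℝ |
        Φ p.1 - ((μ/2 * ‖p.1‖ ^ 2 : ℝ) : EReal) ≤ (p.2 : EReal)})
    (a xz xs : EuclideanSpace ℝ (Fin n)) (φz φs : ℝ)
    (hz : Φ xz = (φz : EReal)) (hs : Φ xs = (φs : EReal))
    (hxz : IsMinOn (fun x => Φ x - ((⟪x, a⟫ : ℝ) : EReal)) Set.univ xz) :
    μ/2 * ‖xs - xz‖ ^ 2 + (φz - ⟪xz, a⟫) ≤ φs - ⟪xs, a⟫ := by
  -- per-λ inequality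
  have key : ∀ l : ℝ, 0 ≤ l → l ≤ 1 →
      μ/2 * (l * (1 - l)) * ‖xs - xz‖ ^ 2 + l * (φz - ⟪xz, a⟫) ≤ l * (φs - ⟪xs, a⟫) := by
    intro l hl0 hl1
    set t1 : ℝ := φs - μ/2 * ‖xs‖ ^ 2 with ht1
    set t2 : ℝ := φz - μ/2 * ‖xz‖ ^ 2 with ht2
    have hm1 : (xs, t1) ∈ {p : EuclideanSpace ℝ (Fin n) × ℝ |
        Φ p.1 - ((μ/2 * ‖p.1‖ ^ 2 : ℝ) : EReal) ≤ (p.2 : EReal)} := by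
      simp only [Set.mem_setOf_eq, hs, ← EReal.coe_sub, ht1, le_refl]
    have hm2 : (xz, t2) ∈ {p : EuclideanSpace ℝ (Fin n) × ℝ |
        Φ p.1 - ((μ/2 * ‖p.1‖ ^ 2 : ℝ) : EReal) ≤ (p.2 : EReal)} := by
      simp only [Set.mem_setOf_eq, hz, ← EReal.coe_sub, ht2, le_refl]
    have hcomb := hΦsc hm1 hm2 hl0 (by linarith : (0:ℝ) ≤ 1 - l) (by ring)
    simp only [Prod.smul_mk, Prod.mk_add_mk, smul_eq_mul, Set.mem_setOf_eq] at hcomb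
    set xl : EuclideanSpace ℝ (Fin n) := l • xs + (1 - l) • xz with hxl
    -- Φ xl ≤ coe (l*t1 + (1-l)*t2 + μ/2 ‖xl‖²)
    have hΦxl : Φ xl ≤ ((l * t1 + (1 - l) * t2 + μ/2 * ‖xl‖ ^ 2 : ℝ) : EReal) := by
      have := add_le_add hcomb (le_refl ((μ/2 * ‖xl‖ ^ 2 : ℝ) : EReal))
      rw [EReal.sub_add_cancel] at this
      calc Φ xl ≤ ((l * t1 + (1 - l) * t2 : ℝ) : EReal) + ((μ/2 * ‖xl‖ ^ 2 : ℝ) : EReal) := this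
        _ = _ := by rw [← EReal.coe_add]
    have hmin := isMinOn_iff.mp hxz xl (Set.mem_univ xl)
    simp only [hz] at hmin
    have hmin2 : ((φz - ⟪xz, a⟫ : ℝ) : EReal)
        ≤ ((l * t1 + (1 - l) * t2 + μ/2 * ‖xl‖ ^ 2 - ⟪xl, a⟫ : ℝ) : EReal) := by
      rw [EReal.coe_sub φz, EReal.coe_sub]
      exact le_trans hmin (EReal.sub_le_sub hΦxl (le_refl _))
    have hreal : φz - ⟪xz, a⟫ ≤ l * t1 + (1 - l) * t2 + μ/2 * ‖xl‖ ^ 2 - ⟪xl, a⟫ :=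
      EReal.coe_le_coe_iff.mp hmin2
    -- expand norms and inner products
    have hnorm : ‖xl‖ ^ 2 = l^2 * ‖xs‖^2 + 2*l*(1-l)*⟪xs, xz⟫ + (1-l)^2 * ‖xz‖^2 := by
      have h0 : ‖xl‖ ^ 2 = ⟪xl, xl⟫ := (real_inner_self_eq_norm_sq xl).symm
      have h1 : ‖xs‖ ^ 2 = ⟪xs, xs⟫ := (real_inner_self_eq_norm_sq xs).symm
      have h2 : ‖xz‖ ^ 2 = ⟪xz, xz⟫ := (real_inner_self_eq_norm_sq xz).symm
      rw [h0, h1, h2, hxl]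
      simp only [inner_add_add_self, real_inner_smul_left, real_inner_smul_right,
        real_inner_comm xz xs]
      ring
    have hinner : ⟪xl, a⟫ = l * ⟪xs, a⟫ + (1 - l) * ⟪xz, a⟫ := by
      rw [hxl, inner_add_left, real_inner_smul_left, real_inner_smul_left]
    have hd : ‖xs - xz‖ ^ 2 = ‖xs‖^2 - 2*⟪xs, xz⟫ + ‖xz‖^2 := norm_sub_sq_real xs xz
    rw [hnorm, hinner, ht1, ht2] at hreal
    rw [hd]
    nlinarith [hreal]
  -- limit argument
  rcases eq_or_lt_of_le (sq_nonneg ‖xs - xz‖) with hd0 | hdpos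
  · have h1 := key 1 (by norm_num) (le_refl 1)
    rw [← hd0]
    simp only [← hd0] at h1
    linarith
  · have hbase : ∀ ε : ℝ, 0 < ε →
        μ/2 * ‖xs - xz‖ ^ 2 + (φz - ⟪xz, a⟫) ≤ (φs - ⟪xs, a⟫) + ε := by
      intro ε hε
      set d := ‖xs - xz‖ ^ 2 with hdd
      have hdpos' : 0 < d := hdpos
      set l : ℝ := min 1 (ε / (μ/2 * d)) with hldef
      have hl0 : 0 < l := lt_min one_pos (div_pos hε (by positivity))
      have hl1 : l ≤ 1 := min_le_left _ _
      have hk := key l (le_of_lt hl0) hl1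
      -- divide by l
      have hdiv : μ/2 * (1 - l) * d + (φz - ⟪xz, a⟫) ≤ φs - ⟪xs, a⟫ := by
        nlinarith [hk, hl0]
      have hle : μ/2 * l * d ≤ ε := by
        have h2 : l ≤ ε / (μ/2 * d) := min_le_right _ _
        calc μ/2 * l * d = l * (μ/2 * d) := by ring
          _ ≤ (ε / (μ/2 * d)) * (μ/2 * d) := by
              apply mul_le_mul_of_nonneg_right h2 (by positivity)
          _ = ε := by field_simp
      nlinarith [hdiv, hle]
    exact le_of_forall_pos_le_add hbase

/-- Primal recovery bound: with `Φ` `μ`-strongly convex proper lsc, `Ψ` proper convex lsc,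
primal problem `min_x Φ(x) + Ψ(Lx)` with unique solution `x⋆`, dual objective
`q(z) = Φ*(L*z) + Ψ*(-z)`, and zero duality gap, the point `x(z) = ∇Φ*(L*z)`
(the minimizer of `Φ(·) - ⟨·, L*z⟩`) satisfies
`(μ/2)‖x(z) - x⋆‖² ≤ q(z) - min q`. -/
theorem primal_recovery_bound {n m : ℕ}
    (Φ : EuclideanSpace ℝ (Fin n) → EReal) (Ψ : EuclideanSpace ℝ (Fin m) → EReal)
    (hΦlsc : LowerSemicontinuous Φ) (hΦbot : ∀ x, Φ x ≠ ⊥) (hΦtop : ∃ x, Φ x ≠ ⊤)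
    (μ : ℝ) (hμ : 0 < μ)
    (hΦsc : Convex ℝ {p : EuclideanSpace ℝ (Fin n) × ℝ |
        Φ p.1 - ((μ/2 * ‖p.1‖ ^ 2 : ℝ) : EReal) ≤ (p.2 : EReal)})
    (hΨconv : Convex ℝ {p : EuclideanSpace ℝ (Fin m) × ℝ | Ψ p.1 ≤ (p.2 : EReal)})
    (hΨlsc : LowerSemicontinuous Ψ) (hΨbot : ∀ x, Ψ x ≠ ⊥) (hΨtop : ∃ x, Ψ x ≠ ⊤)
    (L : EuclideanSpace ℝ (Fin n) →L[ℝ] EuclideanSpace ℝ (Fin m))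
    (xstar : EuclideanSpace ℝ (Fin n))
    (hxs : IsMinOn (fun x => Φ x + Ψ (L x)) Set.univ xstar)
    (huniq : ∀ x, IsMinOn (fun x' => Φ x' + Ψ (L x')) Set.univ x → x = xstar)
    (hdual : (⨅ x, Φ x + Ψ (L x))
        = - ⨅ z, (fconj Φ (ContinuousLinearMap.adjoint L z) + fconj Ψ (-z)))
    (z : EuclideanSpace ℝ (Fin m)) (xz : EuclideanSpace ℝ (Fin n))
    (hxz : IsMinOn (fun x => Φ x - ((⟪x, ContinuousLinearMap.adjoint L z⟫ : ℝ) : EReal))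
        Set.univ xz) :
    ((μ/2 * ‖xz - xstar‖ ^ 2 : ℝ) : EReal)
      ≤ (fconj Φ (ContinuousLinearMap.adjoint L z) + fconj Ψ (-z))
        - ⨅ w, (fconj Φ (ContinuousLinearMap.adjoint L w) + fconj Ψ (-w)) := by
  set A : EuclideanSpace ℝ (Fin n) := ContinuousLinearMap.adjoint L z with hA
  set Q : EReal := ⨅ w, (fconj Φ (ContinuousLinearMap.adjoint L w) + fconj Ψ (-w)) with hQdef
  -- conjugates are never ⊥
  have hcΦbot : fconj Φ A ≠ ⊥ := fconj_ne_bot Φ hΦtop A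
  have hcΨbot : fconj Ψ (-z) ≠ ⊥ := fconj_ne_bot Ψ hΨtop (-z)
  -- Φ xz is real
  obtain ⟨x0, hx0⟩ := hΦtop
  obtain ⟨r0, hr0⟩ := exists_coe_of_ne hx0 (hΦbot x0)
  have hxz0 := isMinOn_iff.mp hxz x0 (Set.mem_univ x0)
  simp only [hr0, ← EReal.coe_sub] at hxz0
  have hΦxz_ne_top : Φ xz ≠ ⊤ := by
    intro h
    rw [h, EReal.top_sub_coe] at hxz0
    exact (EReal.coe_lt_top _).not_ge hxz0
  obtain ⟨φz, hφz⟩ := exists_coe_of_ne hΦxz_ne_top (hΦbot xz)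
  -- value of fconj Φ A
  have hconjΦ : fconj Φ A = ((⟪xz, A⟫ - φz : ℝ) : EReal) := by
    apply le_antisymm
    · apply iSup_le
      intro x
      rcases eq_or_ne (Φ x) ⊤ with hx | hx
      · rw [hx, EReal.sub_top]
        exact bot_le
      · obtain ⟨rx, hrx⟩ := exists_coe_of_ne hx (hΦbot x)
        have hm := isMinOn_iff.mp hxz x (Set.mem_univ x)
        simp only [hφz, hrx, ← EReal.coe_sub] at hm ⊢
        rw [EReal.coe_le_coe_iff] at hm ⊢
        linarith
    · have := le_iSup (fun x => ((⟪x, A⟫ : ℝ) : EReal) - Φ x) xz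
      simp only [hφz, ← EReal.coe_sub] at this
      exact this
  rcases eq_or_ne Q ⊥ with hQ | hQ
  · rw [hQ, EReal.sub_bot]
    · exact le_top
    · rw [Ne, EReal.add_eq_bot_iff]
      push_neg
      exact ⟨hcΦbot, hcΨbot⟩
  -- primal value is real
  have hPeq : (⨅ x, Φ x + Ψ (L x)) = Φ xstar + Ψ (L xstar) :=
    le_antisymm (iInf_le _ xstar) (le_iInf fun x => isMinOn_iff.mp hxs x (Set.mem_univ x))
  have hPQ : Φ xstar + Ψ (L xstar) = -Q := by rw [← hPeq, hdual, hQdef]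
  have hP_ne_top : Φ xstar + Ψ (L xstar) ≠ ⊤ := by
    rw [hPQ, Ne, EReal.neg_eq_top_iff]
    exact hQ
  have hΦs_ne_top : Φ xstar ≠ ⊤ := by
    intro h
    apply hP_ne_top
    rw [h, EReal.top_add_of_ne_bot (hΨbot _)]
  have hΨs_ne_top : Ψ (L xstar) ≠ ⊤ := by
    intro h
    apply hP_ne_top
    rw [h, EReal.add_top_of_ne_bot (hΦbot _)]
  obtain ⟨φs, hφs⟩ := exists_coe_of_ne hΦs_ne_top (hΦbot xstar)
  obtain ⟨ψs, hψs⟩ := exists_coe_of_ne hΨs_ne_top (hΨbot (L xstar))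
  have hQval : Q = ((-(φs + ψs) : ℝ) : EReal) := by
    have : -Q = ((φs + ψs : ℝ) : EReal) := by
      rw [← hPQ, hφs, hψs, EReal.coe_add]
    rw [← neg_neg Q, this, ← EReal.coe_neg]
  rcases eq_or_ne (fconj Ψ (-z)) ⊤ with hT | hT
  · rw [hT, EReal.add_top_of_ne_bot hcΦbot, hQval, EReal.top_sub_coe]
    exact le_top
  obtain ⟨cψ, hcψ⟩ := exists_coe_of_ne hT hcΨbot
  -- Fenchel–Young for Ψ at L xstar
  have hFY : ((⟪L xstar, -z⟫ : ℝ) : EReal) - Ψ (L xstar) ≤ fconj Ψ (-z) := by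
    rw [fconj]; exact le_iSup (fun x => ((⟪x, -z⟫ : ℝ) : EReal) - Ψ x) (L xstar)
  rw [hψs, hcψ, ← EReal.coe_sub, EReal.coe_le_coe_iff] at hFY
  have hadj : ⟪L xstar, z⟫ = ⟪xstar, A⟫ :=
    (ContinuousLinearMap.adjoint_inner_right L xstar z).symm
  have hinnneg : ⟪L xstar, -z⟫ = -⟪L xstar, z⟫ := inner_neg_right _ _
  -- strong convexity
  have hsc := sc_key Φ hΦbot μ hμ hΦsc A xz xstar φz φs hφz hφs hxz
  -- conclude
  rw [hconjΦ, hcψ, hQval, ← EReal.coe_add, ← EReal.coe_sub, EReal.coe_le_coe_iff,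
    norm_sub_rev]
  rw [hinnneg, hadj] at hFY
  linarith
end

section
/- (Projection onto the weighted ℓ¹ ball reduces to soft-thresholding with a scalar parameter.) Let α ∈ ℝ^d with α_i > 0, and C = {x ∈ ℝ^d : Σ α_i|x_i| ≤ 1}. For y ∉ C, the Euclidean projection of y onto C is given componentwise by x_i = sign(y_i)·max(|y_i| − θα_i, 0) for a unique θ > 0 chosen so that Σ α_i max(|y_i| − θα_i, 0) = 1. -/
open scoped RealInnerProductSpace

private lemma key_pointwise (a θ yi zi : ℝ) (ha : 0 < a) (hθ : 0 < θ) :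
    θ * a * max (|yi| - θ * a) 0 - θ * a * |zi| ≤
      (Real.sign yi * max (|yi| - θ * a) 0 - yi) * (zi - Real.sign yi * max (|yi| - θ * a) 0) := by
  have hz1 : zi ≤ |zi| := le_abs_self zi
  have hz2 : -|zi| ≤ zi := neg_abs_le zi
  have hp : 0 < θ * a := mul_pos hθ ha
  rcases le_or_gt |yi| (θ * a) with h | h
  · rw [max_eq_right (by linarith)]
    nlinarith [abs_mul yi zi, le_abs_self (yi*zi), abs_nonneg zi]
  · rw [max_eq_left (by linarith)]
    rcases lt_trichotomy yi 0 with hy | hy | hy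
    · rw [Real.sign_of_neg hy, abs_of_neg hy]
      nlinarith [mul_nonneg hp.le (by linarith : (0:ℝ) ≤ |zi| + zi)]
    · simp [hy] at h; linarith
    · rw [Real.sign_of_pos hy, abs_of_pos hy]
      nlinarith [mul_nonneg hp.le (by linarith : (0:ℝ) ≤ |zi| - zi)]

/-- Projection onto the weighted ℓ¹ ball `C = {x : Σ αᵢ|xᵢ| ≤ 1}` (with `αᵢ > 0`) of a
point `y ∉ C` is given componentwise by soft-thresholding
`xᵢ = sign(yᵢ)·max(|yᵢ| - θαᵢ, 0)` for the unique `θ > 0` with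
`Σ αᵢ max(|yᵢ| - θαᵢ, 0) = 1`. -/
theorem proj_weighted_l1_ball {d : ℕ} (α : Fin d → ℝ) (hα : ∀ i, 0 < α i)
    (y : EuclideanSpace ℝ (Fin d))
    (hy : ¬ (∑ i, α i * |y i| ≤ 1)) :
    (∃! θ : ℝ, 0 < θ ∧ ∑ i, α i * max (|y i| - θ * α i) 0 = 1)
    ∧ ∀ θ : ℝ, 0 < θ → (∑ i, α i * max (|y i| - θ * α i) 0 = 1) →
        ((WithLp.equiv 2 (Fin d → ℝ)).symm
            (fun i => Real.sign (y i) * max (|y i| - θ * α i) 0)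
          ∈ {x : EuclideanSpace ℝ (Fin d) | ∑ i, α i * |x i| ≤ 1})
        ∧ IsMinOn (fun x : EuclideanSpace ℝ (Fin d) => (1 : ℝ)/2 * ‖x - y‖ ^ 2)
            {x : EuclideanSpace ℝ (Fin d) | ∑ i, α i * |x i| ≤ 1}
            ((WithLp.equiv 2 (Fin d → ℝ)).symm
              (fun i => Real.sign (y i) * max (|y i| - θ * α i) 0)) := by
  push_neg at hy
  set f : ℝ → ℝ := fun θ => ∑ i, α i * max (|y i| - θ * α i) 0 with hf
  have f0 : 1 < f 0 := by
    have : f 0 = ∑ i, α i * |y i| :=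
      Finset.sum_congr rfl fun i _ => by rw [zero_mul, sub_zero, max_eq_left (abs_nonneg _)]
    rw [this]; exact hy
  have hanti : ∀ θ1 θ2 : ℝ, θ1 ≤ θ2 → f θ2 ≤ f θ1 := by
    intro θ1 θ2 h
    refine Finset.sum_le_sum fun i _ => ?_
    refine mul_le_mul_of_nonneg_left (max_le_max ?_ le_rfl) (hα i).le
    nlinarith [hα i]
  have hstrict : ∀ θ1 θ2 : ℝ, θ1 < θ2 → f θ2 = 1 → f θ1 ≠ 1 := by
    intro θ1 θ2 h h2
    obtain ⟨i, hi⟩ : ∃ i, α i * max (|y i| - θ2 * α i) 0 ≠ 0 := by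
      by_contra hc
      push_neg at hc
      have : f θ2 = 0 := Finset.sum_eq_zero fun i _ => hc i
      rw [h2] at this; norm_num at this
    have hmi : 0 < |y i| - θ2 * α i := by
      rcases le_or_gt (|y i| - θ2 * α i) 0 with h'|h'
      · exact absurd (by rw [max_eq_right h', mul_zero]) hi
      · exact h'
    have : f θ2 < f θ1 := by
      refine Finset.sum_lt_sum (fun j _ => ?_) ⟨i, Finset.mem_univ i, ?_⟩
      · refine mul_le_mul_of_nonneg_left (max_le_max ?_ le_rfl) (hα j).le
        nlinarith [hα j]
      · refine mul_lt_mul_of_pos_left ?_ (hα i)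
        rw [max_eq_left hmi.le, max_eq_left (by nlinarith [hα i])]
        nlinarith [hα i]
    intro h1; rw [h1, h2] at this; exact lt_irrefl 1 this
  have hne : Nonempty (Fin d) := by
    by_contra h
    rw [not_nonempty_iff] at h
    have : f 0 = 0 := by simp [hf, Finset.univ_eq_empty]
    rw [this] at f0; norm_num at f0
  have huniv : (Finset.univ : Finset (Fin d)).Nonempty := Finset.univ_nonempty
  set T : ℝ := Finset.univ.sup' huniv (fun i => |y i| / α i) with hT
  have hfT : f T = 0 := by
    refine Finset.sum_eq_zero fun i _ => ?_
    have h1 : |y i| / α i ≤ T := Finset.le_sup' (fun j => |y j| / α j) (Finset.mem_univ i)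
    have h2 : |y i| ≤ T * α i := (div_le_iff₀ (hα i)).mp h1
    rw [max_eq_right (by linarith), mul_zero]
  have hc : Continuous f := by
    apply continuous_finset_sum
    intro i _
    exact continuous_const.mul (((continuous_const.sub
      (continuous_id.mul continuous_const)).max continuous_const))
  have hmem1 : (1:ℝ) ∈ Set.uIcc (f 0) (f T) :=
    Set.mem_uIcc.mpr (Or.inr ⟨by rw [hfT]; norm_num, f0.le⟩)
  obtain ⟨θ₀, _, hθeq⟩ := intermediate_value_uIcc hc.continuousOn hmem1
  have hθpos : 0 < θ₀ := by
    by_contra h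
    push_neg at h
    have := hanti θ₀ 0 h
    rw [hθeq] at this; linarith
  constructor
  · refine ⟨θ₀, ⟨hθpos, hθeq⟩, fun θ' ⟨h1, h2⟩ => ?_⟩
    rcases lt_trichotomy θ' θ₀ with h|h|h
    · exact absurd h2 (hstrict θ' θ₀ h hθeq)
    · exact h
    · exact absurd hθeq (hstrict θ₀ θ' h h2)
  · intro θ hθ hsum
    set x : EuclideanSpace ℝ (Fin d) := (WithLp.equiv 2 (Fin d → ℝ)).symm
      (fun i => Real.sign (y i) * max (|y i| - θ * α i) 0) with hx
    have hxi : ∀ i, x i = Real.sign (y i) * max (|y i| - θ * α i) 0 := fun i => rfl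
    have habs : ∀ i, α i * |x i| = α i * max (|y i| - θ * α i) 0 := by
      intro i
      rw [hxi i]
      rcases eq_or_ne (y i) 0 with h|h
      · have : |y i| - θ * α i ≤ 0 := by rw [h, abs_zero]; nlinarith [hα i, hθ]
        rw [max_eq_right this]; simp
      · rw [abs_mul, abs_of_nonneg (le_max_right (|y i| - θ * α i) (0:ℝ))]
        rcases Real.sign_apply_eq_of_ne_zero (y i) h with hs|hs <;> rw [hs] <;> norm_num
    have hmemx : ∑ i, α i * |x i| = 1 := by
      rw [Finset.sum_congr rfl fun i _ => habs i]; exact hsum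
    refine ⟨by rw [Set.mem_setOf_eq, hmemx], ?_⟩
    rw [isMinOn_iff]
    intro z hz
    rw [Set.mem_setOf_eq] at hz
    have hinner : (0:ℝ) ≤ (inner ℝ (z - x) (x - y) : ℝ) := by
      have hexp : (inner ℝ (z - x) (x - y) : ℝ) = ∑ i, (x i - y i) * (z i - x i) := by
        simp only [PiLp.inner_apply, RCLike.inner_apply, conj_trivial, PiLp.sub_apply]
      have h1 : ∑ i, (θ * α i * max (|y i| - θ * α i) 0 - θ * α i * |z i|)
          ≤ ∑ i, (x i - y i) * (z i - x i) :=
        Finset.sum_le_sum fun i _ => by rw [hxi i]; exact key_pointwise (α i) θ (y i) (z i) (hα i) hθ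
      have h2 : ∑ i, (θ * α i * max (|y i| - θ * α i) 0 - θ * α i * |z i|)
          = θ * (∑ i, α i * max (|y i| - θ * α i) 0) - θ * (∑ i, α i * |z i|) := by
        rw [Finset.sum_sub_distrib, Finset.mul_sum, Finset.mul_sum]
        congr 1 <;> exact Finset.sum_congr rfl fun i _ => by ring
      rw [hexp]
      rw [h2, hsum] at h1
      nlinarith
    have hkey := norm_add_sq_real (z - x) (x - y)
    rw [sub_add_sub_cancel] at hkey
    have hn : (0:ℝ) ≤ ‖z - x‖^2 := sq_nonneg _
    nlinarith
end
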